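/- Let A and A′ be sets of dyadic boxes such that every box of A is contained in some box of A′. If a box z is derivable from A by a geometric resolution derivation with r resolution steps, then there exists a box z′ containing z that is derivable from A′ by a geometric resolution derivation with at most r resolution steps. -/

import Mathlib

/-- An `n`-dimensional dyadic box: each component is a binary string (a dyadic
interval), the empty string denoting the whole domain `{0,1}^d`. -/
abbrev DyadicBox (n : ℕ) := Fin n → List Bool

namespace DyadicBox

/-- `b'` contains `b` iff every component of `b'` is a prefix of the
corresponding component of `b`. -/
def Contains {n : ℕ} (b' b : DyadicBox n) : Prop := ∀ i, b' i <+: b i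

/-- A point at bit depth `d`: every component has length exactly `d`. -/
def IsPoint {n : ℕ} (d : ℕ) (p : DyadicBox n) : Prop := ∀ i, (p i).length = d

/-- A set of boxes `A` covers a box `b` at bit depth `d`: every point lying in
`b` lies in some box of `A`. -/
def Covers {n : ℕ} (d : ℕ) (A : Set (DyadicBox n)) (b : DyadicBox n) : Prop :=
  ∀ p : DyadicBox n, IsPoint d p → Contains b p → ∃ a ∈ A, Contains a p

/-- `w` is the geometric resolvent of `w₁` and `w₂` on coordinate `ℓ`:
the `ℓ`-th components are `x0` and `x1` and become `x`, and every other
component of `w` is the longer of the two (prefix-comparable) components. -/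
def IsResolvent {n : ℕ} (w₁ w₂ : DyadicBox n) (ℓ : Fin n) (w : DyadicBox n) : Prop :=
  (∃ x : List Bool, w₁ ℓ = x ++ [false] ∧ w₂ ℓ = x ++ [true] ∧ w ℓ = x) ∧
  ∀ j : Fin n, j ≠ ℓ →
    (w₁ j <+: w₂ j ∧ w j = w₂ j) ∨ (w₂ j <+: w₁ j ∧ w j = w₁ j)

/-- A (tagged) geometric resolution derivation from `A`: an entry tagged `true`
is the geometric resolvent of two earlier entries; an entry tagged `false` is
an axiom, i.e. belongs to `A`. -/
def IsDerivation {n : ℕ} (A : Set (DyadicBox n)) (L : List (Bool × DyadicBox n)) : Prop :=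
  ∀ k : Fin L.length,
    if (L.get k).1 then
      ∃ i j : Fin L.length, (i : ℕ) < (k : ℕ) ∧ (j : ℕ) < (k : ℕ) ∧
        ∃ ℓ : Fin n, IsResolvent ((L.get i).2) ((L.get j).2) ℓ ((L.get k).2)
    else (L.get k).2 ∈ A

/-- The number of resolution steps of a derivation. -/
def steps {n : ℕ} (L : List (Bool × DyadicBox n)) : ℕ := (L.filter (·.1)).length

/-- `z` is derivable from `A` by geometric resolutions: it occurs in some
geometric resolution derivation from `A`. -/
def Derivable {n : ℕ} (A : Set (DyadicBox n)) (z : DyadicBox n) : Prop :=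
  ∃ L : List (Bool × DyadicBox n), IsDerivation A L ∧ z ∈ L.map (·.2)

end DyadicBox

namespace DerivMono
open DyadicBox

theorem prefix_concat_cases {l x : List Bool} {a : Bool} (h : l <+: x ++ [a]) :
    l <+: x ∨ l = x ++ [a] := by
  rcases List.prefix_or_prefix_of_prefix h (List.prefix_append x [a]) with h1 | h1
  · exact Or.inl h1
  · obtain ⟨t, ht⟩ := h1
    obtain ⟨s, hs⟩ := h
    subst ht
    rw [List.append_assoc] at hs
    have hts := List.append_cancel_left hs
    cases t with
    | nil => exact Or.inl ⟨[], by simp⟩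
    | cons b t' =>
      simp only [List.cons_append, List.cons.injEq] at hts
      obtain ⟨hb, ht'⟩ := hts
      have : t' = [] := by
        cases t' with
        | nil => rfl
        | cons c t'' => simp at ht'
      subst this hb
      exact Or.inr (by simp)

theorem resolvent_lift {n : ℕ} {w₁ w₂ w w₁' w₂' : DyadicBox n} {ℓ : Fin n}
    (hres : IsResolvent w₁ w₂ ℓ w) (h1 : Contains w₁' w₁) (h2 : Contains w₂' w₂) :
    Contains w₁' w ∨ Contains w₂' w ∨
      ∃ w', IsResolvent w₁' w₂' ℓ w' ∧ Contains w' w := by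
  obtain ⟨⟨x, hx1, hx2, hx⟩, hj⟩ := hres
  have hx1' := h1 ℓ; rw [hx1] at hx1'
  have hx2' := h2 ℓ; rw [hx2] at hx2'
  have hwj : ∀ j, j ≠ ℓ → w₁ j <+: w j ∧ w₂ j <+: w j := by
    intro j hjl
    rcases hj j hjl with ⟨hp, he⟩ | ⟨hp, he⟩
    · exact ⟨he ▸ hp, he ▸ List.prefix_refl _⟩
    · exact ⟨he ▸ List.prefix_refl _, he ▸ hp⟩
  rcases prefix_concat_cases hx1' with hc1 | hc1
  · left; intro j
    by_cases hjl : j = ℓ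
    · subst hjl; rw [hx]; exact hc1
    · exact (h1 j).trans (hwj j hjl).1
  · rcases prefix_concat_cases hx2' with hc2 | hc2
    · right; left; intro j
      by_cases hjl : j = ℓ
      · subst hjl; rw [hx]; exact hc2
      · exact (h2 j).trans (hwj j hjl).2
    · right; right
      refine ⟨fun j => if _ : j = ℓ then x
          else if (w₁' j).length ≤ (w₂' j).length then w₂' j else w₁' j, ?_, ?_⟩
      · constructor
        · exact ⟨x, hc1, hc2, by simp⟩
        · intro j hjl
          have p1 : w₁' j <+: w j := (h1 j).trans (hwj j hjl).1
          have p2 : w₂' j <+: w j := (h2 j).trans (hwj j hjl).2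
          rcases List.prefix_or_prefix_of_prefix p1 p2 with hp | hp
          · exact Or.inl ⟨hp, by simp [hjl, hp.length_le]⟩
          · by_cases hlen : (w₁' j).length ≤ (w₂' j).length
            · have heq : w₂' j = w₁' j :=
                hp.eq_of_length (le_antisymm hp.length_le hlen)
              exact Or.inr ⟨hp, by simp [hjl, hlen, heq]⟩
            · exact Or.inr ⟨hp, by simp [hjl, hlen]⟩
      · intro j
        by_cases hjl : j = ℓ
        · subst hjl; simp [hx]
        · have p1 : w₁' j <+: w j := (h1 j).trans (hwj j hjl).1
          have p2 : w₂' j <+: w j := (h2 j).trans (hwj j hjl).2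
          by_cases hlen : (w₁' j).length ≤ (w₂' j).length <;>
            simp [hjl, hlen, p1, p2]


theorem steps_concat {n : ℕ} (L : List (Bool × DyadicBox n)) (e : Bool × DyadicBox n) :
    steps (L ++ [e]) = steps L + (if e.1 then 1 else 0) := by
  cases hb : e.1 <;> simp [steps, List.filter_append, hb]

theorem isDerivation_append_left {n : ℕ} {A : Set (DyadicBox n)}
    {L M : List (Bool × DyadicBox n)} (h : IsDerivation A (L ++ M)) :
    IsDerivation A L := by
  intro k
  have hk : (k : ℕ) < (L ++ M).length := by
    have := k.isLt; simp; omega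
  have h' := h ⟨k, hk⟩
  simp only [List.get_eq_getElem] at h' ⊢
  rw [List.getElem_append_left k.isLt] at h'
  by_cases hb : (L[(k:ℕ)]).1
  · rw [if_pos hb] at h' ⊢
    obtain ⟨i, j, hi, hj, ℓ, hr⟩ := h'
    have hi' : (i:ℕ) < L.length := lt_trans hi k.isLt
    have hj' : (j:ℕ) < L.length := lt_trans hj k.isLt
    refine ⟨⟨i, hi'⟩, ⟨j, hj'⟩, hi, hj, ℓ, ?_⟩
    simpa [List.getElem_append_left hi', List.getElem_append_left hj'] using hr
  · rw [if_neg hb] at h' ⊢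
    exact h'

theorem isDerivation_concat {n : ℕ} {A : Set (DyadicBox n)}
    {L : List (Bool × DyadicBox n)} {e : Bool × DyadicBox n}
    (hL : IsDerivation A L)
    (he : if e.1 then ∃ i j : Fin L.length, ∃ ℓ : Fin n,
        IsResolvent ((L.get i).2) ((L.get j).2) ℓ e.2 else e.2 ∈ A) :
    IsDerivation A (L ++ [e]) := by
  intro k
  have hk : (k : ℕ) < L.length + 1 := by
    have := k.isLt; simp only [List.length_append, List.length_singleton] at this; omega
  rcases Nat.lt_succ_iff_lt_or_eq.mp hk with hlt | heq
  · have hget : (L ++ [e]).get k = L.get ⟨k, hlt⟩ := by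
      simp [List.get_eq_getElem, List.getElem_append_left hlt]
    rw [hget]
    have h' := hL ⟨k, hlt⟩
    by_cases hb : (L.get ⟨(k:ℕ), hlt⟩).1
    · rw [if_pos hb] at h' ⊢
      obtain ⟨i, j, hi, hj, ℓ, hr⟩ := h'
      have hi2 := i.isLt
      have hj2 := j.isLt
      refine ⟨⟨i, by simp⟩, ⟨j, by simp⟩, by show (i:ℕ) < (k:ℕ); exact hi, by show (j:ℕ) < (k:ℕ); exact hj, ℓ, ?_⟩
      simp only [List.get_eq_getElem] at hr ⊢
      simpa [List.getElem_append_left hi2, List.getElem_append_left hj2] using hr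
    · rw [if_neg hb] at h' ⊢
      exact h'
  · have hget : (L ++ [e]).get k = e := by
      simp only [List.get_eq_getElem]
      exact List.getElem_concat_length (l := L) (a := e) (i := k) heq _
    rw [hget]
    by_cases hb : e.1
    · rw [if_pos hb] at he ⊢
      obtain ⟨i, j, ℓ, hr⟩ := he
      have hi2 := i.isLt
      have hj2 := j.isLt
      refine ⟨⟨i, by simp⟩, ⟨j, by simp⟩, by show (i:ℕ) < (k:ℕ); omega, by show (j:ℕ) < (k:ℕ); omega, ℓ, ?_⟩
      simp only [List.get_eq_getElem] at hr ⊢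
      simpa [List.getElem_append_left hi2, List.getElem_append_left hj2] using hr
    · rw [if_neg hb] at he ⊢
      exact he

theorem exists_mem_concat {n : ℕ} {L' : List (Bool × DyadicBox n)}
    {e' : Bool × DyadicBox n} {b : DyadicBox n}
    (h : ∃ m : Fin L'.length, Contains ((L'.get m).2) b) :
    ∃ m : Fin (L' ++ [e']).length, Contains (((L' ++ [e']).get m).2) b := by
  obtain ⟨m, hm⟩ := h
  have hm2 := m.isLt
  have hm' : (m : ℕ) < (L' ++ [e']).length := by simp
  exact ⟨⟨m, hm'⟩, by
    simpa [List.get_eq_getElem, List.getElem_append_left hm2] using hm⟩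

theorem map_extend {n : ℕ} {L L' : List (Bool × DyadicBox n)} {e : Bool × DyadicBox n}
    (hmap : ∀ k : Fin L.length, ∃ m : Fin L'.length,
      Contains ((L'.get m).2) ((L.get k).2))
    (hlast : ∃ m : Fin L'.length, Contains ((L'.get m).2) e.2) :
    ∀ k : Fin (L ++ [e]).length, ∃ m : Fin L'.length,
      Contains ((L'.get m).2) (((L ++ [e]).get k).2) := by
  intro k
  have hk := k.isLt
  simp only [List.length_append, List.length_singleton] at hk
  rcases Nat.lt_succ_iff_lt_or_eq.mp hk with hlt | heq
  · obtain ⟨m, hm⟩ := hmap ⟨k, hlt⟩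
    exact ⟨m, by simpa [List.get_eq_getElem, List.getElem_append_left hlt] using hm⟩
  · obtain ⟨m, hm⟩ := hlast
    refine ⟨m, ?_⟩
    have : (L ++ [e]).get k = e := by
      simp only [List.get_eq_getElem]
      exact List.getElem_concat_length (l := L) (a := e) (i := k) heq _
    rw [this]
    exact hm


theorem main_aux {n : ℕ} (A A' : Set (DyadicBox n))
    (hAA' : ∀ a ∈ A, ∃ a' ∈ A', Contains a' a) :
    ∀ L : List (Bool × DyadicBox n), IsDerivation A L →
      ∃ L' : List (Bool × DyadicBox n), IsDerivation A' L' ∧ steps L' ≤ steps L ∧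
        ∀ k : Fin L.length, ∃ m : Fin L'.length,
          Contains ((L'.get m).2) ((L.get k).2) := by
  intro L
  induction L using List.reverseRecOn with
  | nil => exact fun _ => ⟨[], fun k => k.elim0, le_refl _, fun k => k.elim0⟩
  | append_singleton L e ih =>
    intro hD
    obtain ⟨L', hL', hsteps, hmap⟩ := ih (isDerivation_append_left hD)
    have hklast : L.length < (L ++ [e]).length := by simp
    have hlast := hD ⟨L.length, hklast⟩
    have hgetlast : (L ++ [e]).get ⟨L.length, hklast⟩ = e := by
      simp only [List.get_eq_getElem]
      exact List.getElem_concat_length (l := L) (a := e) (i := L.length) rfl _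
    rw [hgetlast] at hlast
    by_cases hb : e.1
    · rw [if_pos hb] at hlast
      obtain ⟨i, j, hi, hj, ℓ, hr⟩ := hlast
      have hi' : (i : ℕ) < L.length := hi
      have hj' : (j : ℕ) < L.length := hj
      have hgi : (L ++ [e]).get i = L.get ⟨i, hi'⟩ := by
        simp [List.get_eq_getElem, List.getElem_append_left hi']
      have hgj : (L ++ [e]).get j = L.get ⟨j, hj'⟩ := by
        simp [List.get_eq_getElem, List.getElem_append_left hj']
      rw [hgi, hgj] at hr
      obtain ⟨m₁, hm₁⟩ := hmap ⟨i, hi'⟩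
      obtain ⟨m₂, hm₂⟩ := hmap ⟨j, hj'⟩
      have hstep_le : steps L' ≤ steps (L ++ [e]) := by
        rw [steps_concat]; omega
      rcases resolvent_lift hr hm₁ hm₂ with hc | hc | ⟨w', hw', hcw⟩
      · exact ⟨L', hL', hstep_le, map_extend hmap ⟨m₁, hc⟩⟩
      · exact ⟨L', hL', hstep_le, map_extend hmap ⟨m₂, hc⟩⟩
      · refine ⟨L' ++ [(true, w')], ?_, ?_, ?_⟩
        · exact isDerivation_concat hL' (by rw [if_pos rfl]; exact ⟨m₁, m₂, ℓ, hw'⟩)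
        · rw [steps_concat, steps_concat, if_pos hb, if_pos rfl]; omega
        · have hlastm : ∃ m : Fin (L' ++ [(true, w')]).length,
              Contains (((L' ++ [(true, w')]).get m).2) e.2 := by
            have hLlt : L'.length < (L' ++ [(true, w')]).length := by simp
            refine ⟨⟨L'.length, hLlt⟩, ?_⟩
            have : (L' ++ [(true, w')]).get ⟨L'.length, hLlt⟩ = (true, w') := by
              simp only [List.get_eq_getElem]
              exact List.getElem_concat_length (l := L') (i := L'.length) rfl _
            rw [this]
            exact hcw
          exact map_extend (fun k => exists_mem_concat (hmap k)) hlastm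
    · rw [if_neg hb] at hlast
      obtain ⟨a', ha', hca'⟩ := hAA' _ hlast
      refine ⟨L' ++ [(false, a')], ?_, ?_, ?_⟩
      · exact isDerivation_concat hL' (by rw [if_neg (by simp)]; exact ha')
      · rw [steps_concat, steps_concat, if_neg hb, if_neg (by simp)]; omega
      · have hlastm : ∃ m : Fin (L' ++ [(false, a')]).length,
            Contains (((L' ++ [(false, a')]).get m).2) e.2 := by
          have hLlt : L'.length < (L' ++ [(false, a')]).length := by simp
          refine ⟨⟨L'.length, hLlt⟩, ?_⟩
          have : (L' ++ [(false, a')]).get ⟨L'.length, hLlt⟩ = (false, a') := by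
            simp only [List.get_eq_getElem]
            exact List.getElem_concat_length (l := L') (i := L'.length) rfl _
          rw [this]
          exact hca'
        exact map_extend (fun k => exists_mem_concat (hmap k)) hlastm

end DerivMono

/-- Monotonicity of geometric resolution derivations: if every box of `A` is
contained in some box of `A'`, and `z` is derivable from `A` with `r`
resolution steps, then some box containing `z` is derivable from `A'` with at
most `r` resolution steps. -/
theorem derivable_mono (n : ℕ) (A A' : Set (DyadicBox n))
    (hAA' : ∀ a ∈ A, ∃ a' ∈ A', DyadicBox.Contains a' a)
    (z : DyadicBox n) (r : ℕ)
    (hz : ∃ L : List (Bool × DyadicBox n),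
      DyadicBox.IsDerivation A L ∧ DyadicBox.steps L = r ∧ z ∈ L.map (·.2)) :
    ∃ z' : DyadicBox n, DyadicBox.Contains z' z ∧
      ∃ L' : List (Bool × DyadicBox n),
        DyadicBox.IsDerivation A' L' ∧ DyadicBox.steps L' ≤ r ∧ z' ∈ L'.map (·.2) := by

  obtain ⟨L, hL, hr, hzL⟩ := hz
  obtain ⟨L', hL', hsteps, hmap⟩ := DerivMono.main_aux A A' hAA' L hL
  obtain ⟨e, heL, hez⟩ := List.mem_map.mp hzL
  obtain ⟨k, hk⟩ := List.mem_iff_get.mp heL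
  obtain ⟨m, hm⟩ := hmap k
  refine ⟨(L'.get m).2, by rw [hk, hez] at hm; exact hm, L', hL', hr ▸ hsteps, ?_⟩
  exact List.mem_map.mpr ⟨L'.get m, List.get_mem L' m, rfl⟩
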